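/- Let X take values in a finite alphabet 𝒳 with P_min := min_x P_X(x) > 0, and let Y be finitely valued. Then P_min · ρ_m²(X;Y) ≤ ‖P_{XY} − P_X × P_Y‖_{TV} ≤ √((2 ln 2) I(X;Y)), where ‖·‖_{TV} := Σ_{x,y}|P_{XY}(x,y) − P_X(x)P_Y(y)| and I is mutual information in bits. -/

import Mathlib

open MeasureTheory ProbabilityTheory Real

noncomputable def maxCorr {Ω α β : Type} [MeasurableSpace Ω] [MeasurableSpace α]
    [MeasurableSpace β] (μ : Measure Ω) (X : Ω → α) (Y : Ω → β) : ℝ :=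
  sSup {r : ℝ | ∃ (g : α → ℝ) (f : β → ℝ), Measurable g ∧ Measurable f ∧
    (∫ ω, g (X ω) ∂μ) = 0 ∧ (∫ ω, f (Y ω) ∂μ) = 0 ∧
    (∫ ω, (g (X ω))^2 ∂μ) = 1 ∧ (∫ ω, (f (Y ω))^2 ∂μ) = 1 ∧
    r = ∫ ω, g (X ω) * f (Y ω) ∂μ}

noncomputable def corr {Ω : Type} [MeasurableSpace Ω] (μ : Measure Ω) (U V : Ω → ℝ) : ℝ :=
  (∫ ω, (U ω - ∫ x, U x ∂μ) * (V ω - ∫ x, V x ∂μ) ∂μ) /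
    (Real.sqrt (variance U μ) * Real.sqrt (variance V μ))

variable {Ω α β : Type} [MeasurableSpace Ω]
  [MeasurableSpace α] [MeasurableSingletonClass α] [Fintype α]
  [MeasurableSpace β] [MeasurableSingletonClass β] [Fintype β]

/-- Joint pmf of finitely-valued (X,Y). -/
noncomputable def pJoint (μ : Measure Ω) (X : Ω → α) (Y : Ω → β) (x : α) (y : β) : ℝ :=
  (μ (X ⁻¹' {x} ∩ Y ⁻¹' {y})).toReal

/-- Marginal pmf. -/
noncomputable def pMarg (μ : Measure Ω) (X : Ω → α) (x : α) : ℝ := (μ (X ⁻¹' {x})).toReal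

/-- χ²-divergence between the joint pmf and the product of marginals. -/
noncomputable def chiSq (μ : Measure Ω) (X : Ω → α) (Y : Ω → β) : ℝ :=
  (∑ x : α, ∑ y : β, (pJoint μ X Y x y)^2 / (pMarg μ X x * pMarg μ Y y)) - 1

/-- Mutual information in bits for finitely-valued (X,Y). -/
noncomputable def miFin (μ : Measure Ω) (X : Ω → α) (Y : Ω → β) : ℝ :=
  ∑ x : α, ∑ y : β,
    pJoint μ X Y x y * Real.logb 2 (pJoint μ X Y x y / (pMarg μ X x * pMarg μ Y y))
/-- Unnormalized total variation distance between the joint pmf and product of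
marginals. -/
noncomputable def tvDist (μ : Measure Ω) (X : Ω → α) (Y : Ω → β) : ℝ :=
  ∑ x : α, ∑ y : β, |pJoint μ X Y x y - pMarg μ X x * pMarg μ Y y|

/-! ### Auxiliary calculus lemmas for Pinsker's inequality -/

open Real Set in
section

private lemma kfun_deriv {t : ℝ} (ht : 0 < t) :
    HasDerivAt (fun s => (s + 1) * Real.log s - 2 * (s - 1)) (Real.log t + 1 / t - 1) t := by
  have h1 : HasDerivAt (fun s : ℝ => (s + 1) * Real.log s)
      (1 * Real.log t + (t + 1) * t⁻¹) t :=
    ((hasDerivAt_id t).add_const 1).mul (Real.hasDerivAt_log ht.ne')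
  have h2 : HasDerivAt (fun s : ℝ => 2 * (s - 1)) 2 t := by
    simpa using ((hasDerivAt_id t).sub_const 1).const_mul 2
  refine (h1.sub h2).congr_deriv ?_
  field_simp
  ring

private lemma kfun_nonneg {t : ℝ} (ht : 1 ≤ t) : 0 ≤ (t + 1) * Real.log t - 2 * (t - 1) := by
  have mono : MonotoneOn (fun s => (s + 1) * Real.log s - 2 * (s - 1)) (Ici (1:ℝ)) := by
    have hint : interior (Ici (1:ℝ)) = Ioi 1 := interior_Ici
    apply monotoneOn_of_deriv_nonneg (convex_Ici 1)
    · intro x hx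
      exact ((kfun_deriv (lt_of_lt_of_le one_pos hx)).continuousAt).continuousWithinAt
    · intro x hx
      rw [hint] at hx
      exact (kfun_deriv (lt_trans one_pos hx)).differentiableAt.differentiableWithinAt
    · intro x hx
      rw [hint] at hx
      rw [(kfun_deriv (lt_trans one_pos hx)).deriv]
      have hx0 : (0:ℝ) < x := lt_trans one_pos hx
      have := Real.log_le_sub_one_of_pos (inv_pos.2 hx0)
      rw [Real.log_inv] at this
      have : 1 - 1/x ≤ Real.log x := by rw [one_div]; linarith
      have hx1 : (0:ℝ) < 1/x := by positivity
      linarith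
  have := mono (self_mem_Ici) (mem_Ici.2 ht) ht
  simpa using this

private lemma kfun_nonpos {t : ℝ} (ht0 : 0 < t) (ht : t ≤ 1) :
    (t + 1) * Real.log t - 2 * (t - 1) ≤ 0 := by
  have mono : MonotoneOn (fun s => (s + 1) * Real.log s - 2 * (s - 1)) (Ioc (0:ℝ) 1) := by
    have hint : interior (Ioc (0:ℝ) 1) = Ioo 0 1 := interior_Ioc
    apply monotoneOn_of_deriv_nonneg (convex_Ioc 0 1)
    · intro x hx
      exact ((kfun_deriv hx.1).continuousAt).continuousWithinAt
    · intro x hx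
      rw [hint] at hx
      exact (kfun_deriv hx.1).differentiableAt.differentiableWithinAt
    · intro x hx
      rw [hint] at hx
      rw [(kfun_deriv hx.1).deriv]
      have hlog : -Real.log x ≤ x⁻¹ - 1 := by
        simpa [Real.log_inv] using Real.log_le_sub_one_of_pos (inv_pos.2 hx.1)
      rw [one_div]
      linarith
  have := mono (mem_Ioc.2 ⟨ht0, ht⟩) (mem_Ioc.2 ⟨one_pos, le_refl 1⟩) ht
  simpa using this

private lemma hfun_deriv {t : ℝ} (ht : 0 < t) :
    HasDerivAt (fun s => (2 * s + 4) * (s * Real.log s - s + 1) - 3 * (s - 1) ^ 2)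
      (4 * ((t + 1) * Real.log t - 2 * (t - 1))) t := by
  have hu : HasDerivAt (fun s : ℝ => s * Real.log s - s + 1) (Real.log t) t := by
    have h1 : HasDerivAt (fun s : ℝ => s * Real.log s) (1 * Real.log t + t * t⁻¹) t :=
      (hasDerivAt_id t).mul (Real.hasDerivAt_log ht.ne')
    have : HasDerivAt (fun s : ℝ => s * Real.log s - s + 1)
        (1 * Real.log t + t * t⁻¹ - 1) t := (h1.sub (hasDerivAt_id t)).add_const 1
    convert this using 1
    field_simp
    ring
  have hv : HasDerivAt (fun s : ℝ => 2 * s + 4) 2 t := by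
    simpa using ((hasDerivAt_id t).const_mul 2).add_const 4
  have hp : HasDerivAt (fun s : ℝ => (2 * s + 4) * (s * Real.log s - s + 1))
      (2 * (t * Real.log t - t + 1) + (2 * t + 4) * Real.log t) t := hv.mul hu
  have hq : HasDerivAt (fun s : ℝ => 3 * (s - 1) ^ 2) (3 * (2 * (t - 1))) t := by
    simpa using (((hasDerivAt_id t).sub_const 1).pow 2).const_mul 3
  refine (hp.sub hq).congr_deriv ?_
  ring

private lemma hfun_nonneg {t : ℝ} (ht : 0 < t) :
    3 * (t - 1) ^ 2 ≤ (2 * t + 4) * (t * Real.log t - t + 1) := by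
  have key : ∀ x : ℝ, 0 < x →
      0 ≤ (fun s => (2 * s + 4) * (s * Real.log s - s + 1) - 3 * (s - 1) ^ 2) x := by
    intro x hx
    rcases le_total 1 x with h1 | h1
    · have mono : MonotoneOn (fun s => (2 * s + 4) * (s * Real.log s - s + 1) - 3 * (s - 1) ^ 2)
          (Ici (1:ℝ)) := by
        apply monotoneOn_of_deriv_nonneg (convex_Ici 1)
        · intro z hz
          exact (hfun_deriv (lt_of_lt_of_le one_pos hz)).continuousAt.continuousWithinAt
        · intro z hz
          rw [interior_Ici] at hz
          exact (hfun_deriv (lt_trans one_pos hz)).differentiableAt.differentiableWithinAt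
        · intro z hz
          rw [interior_Ici] at hz
          rw [(hfun_deriv (lt_trans one_pos hz)).deriv]
          have := kfun_nonneg (le_of_lt hz)
          linarith
      have := mono self_mem_Ici (mem_Ici.2 h1) h1
      simp only at this ⊢
      norm_num at this ⊢
      linarith
    · have anti : AntitoneOn (fun s => (2 * s + 4) * (s * Real.log s - s + 1) - 3 * (s - 1) ^ 2)
          (Ioc (0:ℝ) 1) := by
        apply antitoneOn_of_deriv_nonpos (convex_Ioc 0 1)
        · intro z hz
          exact (hfun_deriv hz.1).continuousAt.continuousWithinAt
        · intro z hz
          rw [interior_Ioc] at hz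
          exact (hfun_deriv hz.1).differentiableAt.differentiableWithinAt
        · intro z hz
          rw [interior_Ioc] at hz
          rw [(hfun_deriv hz.1).deriv]
          have := kfun_nonpos hz.1 (le_of_lt hz.2)
          linarith
      have := anti (mem_Ioc.2 ⟨hx, h1⟩) (mem_Ioc.2 ⟨one_pos, le_refl 1⟩) h1
      simp only at this ⊢
      norm_num at this ⊢
      linarith
  have := key t ht
  simp only at this
  linarith

/-- pointwise Pinsker bound -/
private lemma pinsker_pointwise {p q : ℝ} (hp : 0 ≤ p) (hq : 0 < q) :
    3 * (p - q) ^ 2 ≤ (2 * p + 4 * q) * (p * Real.log (p / q) - p + q) := by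
  rcases eq_or_lt_of_le hp with h0 | h0
  · rw [← h0]
    simp
    nlinarith
  · have key := hfun_nonneg (div_pos h0 hq)
    set L := Real.log (p / q) with hL
    have e1 : 3 * (p - q) ^ 2 = 3 * (p / q - 1) ^ 2 * q ^ 2 := by
      field_simp
    have e2 : (2 * p + 4 * q) * (p * L - p + q)
        = (2 * (p / q) + 4) * ((p / q) * L - p / q + 1) * q ^ 2 := by
      field_simp
    rw [e1, e2]
    exact mul_le_mul_of_nonneg_right key (sq_nonneg q)
end


private lemma pinsker_fin {ι : Type} [Fintype ι] (P Q : ι → ℝ) (hP : ∀ i, 0 ≤ P i)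
    (hQ : ∀ i, 0 < Q i) (hPs : ∑ i, P i = 1) (hQs : ∑ i, Q i = 1) :
    (∑ i, |P i - Q i|) ^ 2 ≤ 2 * ∑ i, (P i * Real.log (P i / Q i) - P i + Q i) := by
  have hB : ∀ i, 0 < 2 * P i + 4 * Q i := fun i => by nlinarith [hP i, hQ i]
  have cs := Finset.sum_mul_sq_le_sq_mul_sq Finset.univ
    (fun i => Real.sqrt (2 * P i + 4 * Q i))
    (fun i => |P i - Q i| / Real.sqrt (2 * P i + 4 * Q i))
  have e1 : ∀ i : ι, Real.sqrt (2 * P i + 4 * Q i) *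
      (|P i - Q i| / Real.sqrt (2 * P i + 4 * Q i)) = |P i - Q i| := fun i => by
    rw [mul_comm, div_mul_cancel₀]
    exact (Real.sqrt_pos.2 (hB i)).ne'
  have e2 : ∀ i : ι, (Real.sqrt (2 * P i + 4 * Q i)) ^ 2 = 2 * P i + 4 * Q i := fun i =>
    Real.sq_sqrt (hB i).le
  have e3 : ∀ i : ι, (|P i - Q i| / Real.sqrt (2 * P i + 4 * Q i)) ^ 2
      = (P i - Q i) ^ 2 / (2 * P i + 4 * Q i) := fun i => by
    rw [div_pow, sq_abs, Real.sq_sqrt (hB i).le]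
  simp only [e1, e2, e3] at cs
  have hsumB : ∑ i : ι, (2 * P i + 4 * Q i) = 6 := by
    rw [Finset.sum_add_distrib, ← Finset.mul_sum, ← Finset.mul_sum, hPs, hQs]
    norm_num
  have hg : ∑ i : ι, (P i - Q i) ^ 2 / (2 * P i + 4 * Q i)
      ≤ ∑ i : ι, (1/3) * (P i * Real.log (P i / Q i) - P i + Q i) := by
    refine Finset.sum_le_sum fun i _ => ?_
    rw [div_le_iff₀ (hB i)]
    have := pinsker_pointwise (hP i) (hQ i)
    linarith
  rw [hsumB] at cs
  calc (∑ i, |P i - Q i|) ^ 2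
      ≤ 6 * ∑ i : ι, (P i - Q i) ^ 2 / (2 * P i + 4 * Q i) := cs
    _ ≤ 6 * ∑ i : ι, (1/3) * (P i * Real.log (P i / Q i) - P i + Q i) := by linarith
    _ = 2 * ∑ i, (P i * Real.log (P i / Q i) - P i + Q i) := by
        rw [← Finset.mul_sum]; ring


/-! ### pmf and integral lemmas -/

set_option linter.unusedSectionVars false

section lemmas
variable (μ : Measure Ω) [IsProbabilityMeasure μ] (X : Ω → α) (Y : Ω → β)

lemma sum_pJoint_right (hX : Measurable X) (hY : Measurable Y) (x : α) :
    ∑ y : β, pJoint μ X Y x y = pMarg μ X x := by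
  unfold pJoint pMarg
  rw [← ENNReal.toReal_sum (fun y _ => measure_ne_top μ _)]
  congr 1
  have hdis : Pairwise (Function.onFun Disjoint fun y : β => X ⁻¹' {x} ∩ Y ⁻¹' {y}) := by
    intro y y' hyy'
    simp only [Function.onFun, Set.disjoint_left]
    rintro ω ⟨-, h1⟩ ⟨-, h2⟩
    exact hyy' (by simp_all)
  have hset : X ⁻¹' {x} = ⋃ y : β, X ⁻¹' {x} ∩ Y ⁻¹' {y} := by
    ext ω; simp [Set.mem_iUnion]
  conv_rhs => rw [hset]
  rw [measure_iUnion hdis (fun y => (hX (measurableSet_singleton x)).inter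
    (hY (measurableSet_singleton y))), tsum_fintype]

lemma sum_pJoint_left (hX : Measurable X) (hY : Measurable Y) (y : β) :
    ∑ x : α, pJoint μ X Y x y = pMarg μ Y y := by
  unfold pJoint pMarg
  rw [← ENNReal.toReal_sum (fun x _ => measure_ne_top μ _)]
  congr 1
  have hdis : Pairwise (Function.onFun Disjoint fun x : α => X ⁻¹' {x} ∩ Y ⁻¹' {y}) := by
    intro x x' hxx'
    simp only [Function.onFun, Set.disjoint_left]
    rintro ω ⟨h1, -⟩ ⟨h2, -⟩
    exact hxx' (by simp_all)
  have hset : Y ⁻¹' {y} = ⋃ x : α, X ⁻¹' {x} ∩ Y ⁻¹' {y} := by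
    ext ω; simp [Set.mem_iUnion]
  conv_rhs => rw [hset]
  rw [measure_iUnion hdis (fun x => (hX (measurableSet_singleton x)).inter
    (hY (measurableSet_singleton y))), tsum_fintype]

lemma sum_pMarg (hX : Measurable X) : ∑ x : α, pMarg μ X x = 1 := by
  unfold pMarg
  rw [← ENNReal.toReal_sum (fun x _ => measure_ne_top μ _)]
  have hdis : Pairwise (Function.onFun Disjoint fun x : α => X ⁻¹' {x}) := by
    intro x x' hxx'
    simp only [Function.onFun, Set.disjoint_left]
    rintro ω h1 h2
    exact hxx' (by simp_all)
  have hset : (Set.univ : Set Ω) = ⋃ x : α, X ⁻¹' {x} := by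
    ext ω; simp [Set.mem_iUnion]
  have : ∑ x : α, μ (X ⁻¹' {x}) = μ Set.univ := by
    conv_rhs => rw [hset]
    rw [measure_iUnion hdis (fun x => hX (measurableSet_singleton x)), tsum_fintype]
  rw [this]
  simp

lemma pJoint_nonneg (x : α) (y : β) : 0 ≤ pJoint μ X Y x y := ENNReal.toReal_nonneg

lemma pJoint_le_pMargY (x : α) (y : β) : pJoint μ X Y x y ≤ pMarg μ Y y := by
  unfold pJoint pMarg
  exact ENNReal.toReal_mono (measure_ne_top μ _) (measure_mono Set.inter_subset_right)

lemma pMarg_le_one (x : α) : pMarg μ X x ≤ 1 := by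
  unfold pMarg
  simpa using ENNReal.toReal_mono (by simp) (prob_le_one (μ := μ) (s := X ⁻¹' {x}))

/-- marginal integral -/
lemma integral_comp_fst (hX : Measurable X) (g : α → ℝ) (hg : Measurable g) :
    ∫ ω, g (X ω) ∂μ = ∑ x : α, pMarg μ X x * g x := by
  haveI : IsProbabilityMeasure (μ.map X) := Measure.isProbabilityMeasure_map hX.aemeasurable
  rw [← integral_map hX.aemeasurable hg.aestronglyMeasurable,
    integral_fintype (Integrable.of_finite)]
  refine Finset.sum_congr rfl fun x _ => ?_
  rw [Measure.real, Measure.map_apply hX (measurableSet_singleton x)]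
  rfl

/-- joint integral -/
lemma integral_comp_pair (hX : Measurable X) (hY : Measurable Y) (F : α × β → ℝ)
    (hF : Measurable F) :
    ∫ ω, F (X ω, Y ω) ∂μ = ∑ p : α × β, pJoint μ X Y p.1 p.2 * F p := by
  have hZ : Measurable (fun ω => (X ω, Y ω)) := hX.prodMk hY
  haveI : IsProbabilityMeasure (μ.map (fun ω => (X ω, Y ω))) :=
    Measure.isProbabilityMeasure_map hZ.aemeasurable
  rw [← integral_map hZ.aemeasurable hF.aestronglyMeasurable,
    integral_fintype (Integrable.of_finite)]
  refine Finset.sum_congr rfl fun p _ => ?_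
  rw [Measure.real, Measure.map_apply hZ (measurableSet_singleton p)]
  have : (fun ω => (X ω, Y ω)) ⁻¹' {p} = X ⁻¹' {p.1} ∩ Y ⁻¹' {p.2} := by
    ext ω; simp [Prod.ext_iff]
  rw [this]
  rfl

end lemmas


/-- P_min·ρ_m²(X;Y) ≤ ‖P_XY − P_X×P_Y‖_TV ≤ √((2 ln 2)·I(X;Y)). -/
theorem stmt12 (μ : Measure Ω) [IsProbabilityMeasure μ]
    (X : Ω → α) (Y : Ω → β) (hX : Measurable X) (hY : Measurable Y)
    (hpX : ∀ x : α, 0 < pMarg μ X x) (hpY : ∀ y : β, 0 < pMarg μ Y y) :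
    (⨅ x : α, pMarg μ X x) * (maxCorr μ X Y)^2 ≤ tvDist μ X Y ∧
    tvDist μ X Y ≤ Real.sqrt ((2 * Real.log 2) * miFin μ X Y) := by
  classical
  -- nonemptiness
  have hΩ : Nonempty Ω := by
    by_contra h
    rw [not_nonempty_iff] at h
    have h1 : μ Set.univ = 1 := measure_univ
    rw [Set.univ_eq_empty_iff.2 h] at h1
    simp at h1
  haveI : Nonempty α := Nonempty.map X hΩ
  haveI : Nonempty β := Nonempty.map Y hΩ
  set P : α × β → ℝ := fun p => pJoint μ X Y p.1 p.2 with hPdef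
  set Q : α × β → ℝ := fun p => pMarg μ X p.1 * pMarg μ Y p.2 with hQdef
  have hQpos : ∀ p : α × β, 0 < Q p := fun p => mul_pos (hpX p.1) (hpY p.2)
  have hPn : ∀ p : α × β, 0 ≤ P p := fun p => pJoint_nonneg μ X Y p.1 p.2
  have hPsum : ∑ p : α × β, P p = 1 := by
    rw [Fintype.sum_prod_type]
    calc ∑ x : α, ∑ y : β, P (x, y) = ∑ x : α, pMarg μ X x :=
          Finset.sum_congr rfl fun x _ => sum_pJoint_right μ X Y hX hY x
      _ = 1 := sum_pMarg μ X hX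
  have hQsum : ∑ p : α × β, Q p = 1 := by
    rw [Fintype.sum_prod_type]
    have : ∑ x : α, ∑ y : β, Q (x, y) = (∑ x : α, pMarg μ X x) * ∑ y : β, pMarg μ Y y := by
      rw [Finset.sum_mul_sum]
    rw [this, sum_pMarg μ X hX, sum_pMarg μ Y hY, mul_one]
  have hTV : tvDist μ X Y = ∑ p : α × β, |P p - Q p| := by
    unfold tvDist
    exact (Fintype.sum_prod_type fun p : α × β => |P p - Q p|).symm
  have hTV0 : 0 ≤ tvDist μ X Y := by
    rw [hTV]; exact Finset.sum_nonneg fun p _ => abs_nonneg _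
  constructor
  · -- First inequality
    set S : ℝ := ∑ p : α × β, (P p - Q p) ^ 2 / Q p with hSdef
    have hS0 : 0 ≤ S := Finset.sum_nonneg fun p _ => div_nonneg (sq_nonneg _) (hQpos p).le
    -- every candidate correlation r satisfies |r| ≤ √S
    have habs : ∀ r ∈ {r : ℝ | ∃ (g : α → ℝ) (f : β → ℝ), Measurable g ∧ Measurable f ∧
        (∫ ω, g (X ω) ∂μ) = 0 ∧ (∫ ω, f (Y ω) ∂μ) = 0 ∧
        (∫ ω, (g (X ω))^2 ∂μ) = 1 ∧ (∫ ω, (f (Y ω))^2 ∂μ) = 1 ∧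
        r = ∫ ω, g (X ω) * f (Y ω) ∂μ}, |r| ≤ Real.sqrt S := by
      rintro r ⟨g, f, hg, hf, hEg, hEf, hEg2, hEf2, hr⟩
      have hEg' : ∑ x : α, pMarg μ X x * g x = 0 := by
        rw [← hEg]; exact (integral_comp_fst μ X hX g hg).symm
      have hEf' : ∑ y : β, pMarg μ Y y * f y = 0 := by
        rw [← hEf]; exact (integral_comp_fst μ Y hY f hf).symm
      have hEg2' : ∑ x : α, pMarg μ X x * (g x) ^ 2 = 1 := by
        rw [← hEg2]; exact (integral_comp_fst μ X hX (fun x => (g x) ^ 2) (hg.pow_const 2)).symm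
      have hEf2' : ∑ y : β, pMarg μ Y y * (f y) ^ 2 = 1 := by
        rw [← hEf2]; exact (integral_comp_fst μ Y hY (fun y => (f y) ^ 2) (hf.pow_const 2)).symm
      have hr' : r = ∑ p : α × β, P p * (g p.1 * f p.2) := by
        rw [hr]
        exact integral_comp_pair μ X Y hX hY (fun p => g p.1 * f p.2)
          ((hg.comp measurable_fst).mul (hf.comp measurable_snd))
      have hQgf : ∑ p : α × β, Q p * (g p.1 * f p.2) = 0 := by
        rw [Fintype.sum_prod_type]
        have : ∀ x : α, ∑ y : β, Q (x, y) * (g x * f y)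
            = (pMarg μ X x * g x) * ∑ y : β, pMarg μ Y y * f y := fun x => by
          rw [Finset.mul_sum]
          exact Finset.sum_congr rfl fun y _ => by simp only [hQdef]; ring
        simp_rw [this, hEf', mul_zero, Finset.sum_const_zero]
      have hrPQ : r = ∑ p : α × β, (P p - Q p) * (g p.1 * f p.2) := by
        rw [hr']
        simp only [sub_mul, Finset.sum_sub_distrib, hQgf, sub_zero]
      have hQg2f2 : ∑ p : α × β, Q p * ((g p.1) ^ 2 * (f p.2) ^ 2) = 1 := by
        rw [Fintype.sum_prod_type]
        have : ∀ x : α, ∑ y : β, Q (x, y) * ((g x) ^ 2 * (f y) ^ 2)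
            = (pMarg μ X x * (g x) ^ 2) * ∑ y : β, pMarg μ Y y * (f y) ^ 2 := fun x => by
          rw [Finset.mul_sum]
          exact Finset.sum_congr rfl fun y _ => by simp only [hQdef]; ring
        simp_rw [this, hEf2', mul_one]
        exact hEg2'
      have cs := Finset.sum_mul_sq_le_sq_mul_sq Finset.univ
        (fun p : α × β => (P p - Q p) / Real.sqrt (Q p))
        (fun p : α × β => Real.sqrt (Q p) * (g p.1 * f p.2))
      have e1 : ∀ p : α × β, (P p - Q p) / Real.sqrt (Q p) *
          (Real.sqrt (Q p) * (g p.1 * f p.2)) = (P p - Q p) * (g p.1 * f p.2) := fun p => by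
        have hs : Real.sqrt (Q p) ≠ 0 := (Real.sqrt_pos.2 (hQpos p)).ne'
        field_simp
      have e2 : ∀ p : α × β, ((P p - Q p) / Real.sqrt (Q p)) ^ 2
          = (P p - Q p) ^ 2 / Q p := fun p => by rw [div_pow, Real.sq_sqrt (hQpos p).le]
      have e3 : ∀ p : α × β, (Real.sqrt (Q p) * (g p.1 * f p.2)) ^ 2
          = Q p * ((g p.1) ^ 2 * (f p.2) ^ 2) := fun p => by
        rw [mul_pow, Real.sq_sqrt (hQpos p).le, mul_pow]
      simp only [e1, e2, e3] at cs
      rw [hQg2f2, mul_one] at cs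
      rw [← hrPQ] at cs
      exact Real.abs_le_sqrt cs
    have hub : maxCorr μ X Y ≤ Real.sqrt S :=
      Real.sSup_le (fun r hr => le_trans (le_abs_self r) (habs r hr)) (Real.sqrt_nonneg S)
    have hlb : -Real.sqrt S ≤ maxCorr μ X Y := by
      rcases Set.eq_empty_or_nonempty {r : ℝ | ∃ (g : α → ℝ) (f : β → ℝ),
          Measurable g ∧ Measurable f ∧
          (∫ ω, g (X ω) ∂μ) = 0 ∧ (∫ ω, f (Y ω) ∂μ) = 0 ∧
          (∫ ω, (g (X ω))^2 ∂μ) = 1 ∧ (∫ ω, (f (Y ω))^2 ∂μ) = 1 ∧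
          r = ∫ ω, g (X ω) * f (Y ω) ∂μ} with he | hne
      · unfold maxCorr
        rw [he, Real.sSup_empty]
        exact neg_nonpos.2 (Real.sqrt_nonneg S)
      · obtain ⟨r, hr⟩ := hne
        have h1 : -Real.sqrt S ≤ r := (abs_le.1 (habs r hr)).1
        have h2 : r ≤ maxCorr μ X Y :=
          le_csSup ⟨Real.sqrt S, fun z hz => le_trans (le_abs_self z) (habs z hz)⟩ hr
        linarith
    have hmc : (maxCorr μ X Y) ^ 2 ≤ S := by
      have := sq_le_sq' hlb hub
      rwa [Real.sq_sqrt hS0] at this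
    -- P_min bound
    set Pm : ℝ := ⨅ x : α, pMarg μ X x with hPm
    have hPm0 : 0 ≤ Pm := le_ciInf fun x => (hpX x).le
    have hPmle : ∀ x : α, Pm ≤ pMarg μ X x := fun x =>
      ciInf_le ⟨0, by rintro z ⟨x', rfl⟩; exact (hpX x').le⟩ x
    have hpoint : ∀ p : α × β, Pm * ((P p - Q p) ^ 2 / Q p) ≤ |P p - Q p| := by
      intro p
      have habsd : |P p - Q p| ≤ pMarg μ Y p.2 := by
        rw [abs_sub_le_iff]
        constructor
        · have := pJoint_le_pMargY μ X Y p.1 p.2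
          have := hQpos p
          simp only [hPdef, hQdef] at *
          nlinarith
        · have h1 : Q p ≤ pMarg μ Y p.2 := by
            simp only [hQdef]
            nlinarith [pMarg_le_one μ X p.1, (hpY p.2).le, hpX p.1]
          have := hPn p
          linarith
      have h1 : Pm * |P p - Q p| ≤ Q p := by
        calc Pm * |P p - Q p| ≤ pMarg μ X p.1 * pMarg μ Y p.2 :=
              mul_le_mul (hPmle p.1) habsd (abs_nonneg _) (hpX p.1).le
          _ = Q p := rfl
      rw [mul_div_assoc', div_le_iff₀ (hQpos p)]
      have h2 := mul_le_mul_of_nonneg_right h1 (abs_nonneg (P p - Q p))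
      nlinarith [sq_abs (P p - Q p), abs_nonneg (P p - Q p)]
    calc Pm * (maxCorr μ X Y) ^ 2 ≤ Pm * S := mul_le_mul_of_nonneg_left hmc hPm0
      _ = ∑ p : α × β, Pm * ((P p - Q p) ^ 2 / Q p) := Finset.mul_sum _ _ _
      _ ≤ ∑ p : α × β, |P p - Q p| := Finset.sum_le_sum fun p _ => hpoint p
      _ = tvDist μ X Y := hTV.symm
  · -- Second inequality (Pinsker)
    have hpins := pinsker_fin P Q hPn hQpos hPsum hQsum
    have hkl : ∑ p : α × β, (P p * Real.log (P p / Q p) - P p + Q p)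
        = Real.log 2 * miFin μ X Y := by
      rw [Finset.sum_add_distrib, Finset.sum_sub_distrib, hPsum, hQsum]
      have hmi : miFin μ X Y = ∑ p : α × β, P p * Real.logb 2 (P p / Q p) := by
        unfold miFin
        exact (Fintype.sum_prod_type fun p : α × β => P p * Real.logb 2 (P p / Q p)).symm
      rw [hmi, Finset.mul_sum]
      have : ∀ p : α × β, P p * Real.log (P p / Q p)
          = Real.log 2 * (P p * Real.logb 2 (P p / Q p)) := fun p => by
        rw [Real.logb]
        have h2 : Real.log 2 ≠ 0 := (Real.log_pos one_lt_two).ne'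
        field_simp
      simp_rw [this]
      ring
    rw [hkl] at hpins
    have hsq : (tvDist μ X Y) ^ 2 ≤ 2 * Real.log 2 * miFin μ X Y := by
      rw [hTV]
      calc (∑ p : α × β, |P p - Q p|) ^ 2 ≤ 2 * (Real.log 2 * miFin μ X Y) := hpins
        _ = 2 * Real.log 2 * miFin μ X Y := by ring
    have hy : 0 ≤ 2 * Real.log 2 * miFin μ X Y := le_trans (sq_nonneg _) hsq
    exact (Real.le_sqrt hTV0 hy).2 hsq
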